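/- Let H be a Hopf algebra and B an algebra. Suppose τ, τ' : H → B are mutual convolution inverses with τ(1) = τ'(1) = 1. Then for the maps A ↦ A^τ with A^τ(h) = Σ τ'(h₁)A(h₂)τ(h₃) + Σ τ'(h₁)dτ(h₂) acting on linear maps A : H → Γ¹(B) with A(1)=0, one has (A^τ)^{τ'} = A; i.e., the gauge transformation of connection forms by τ is inverted by the gauge transformation by the convolution inverse τ'. -/

import Mathlib

set_option linter.unusedSectionVars false
set_option maxHeartbeats 1000000


open TensorProduct

variable {k : Type*} [Field k]
variable {H : Type*} [Ring H] [HopfAlgebra k H]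
variable {B : Type*} [Ring B] [Algebra k B]
variable {Γ : Type*} [AddCommGroup Γ] [Module k Γ]
  [Module B Γ] [Module Bᵐᵒᵖ Γ]
  [IsScalarTower k B Γ] [IsScalarTower k Bᵐᵒᵖ Γ]
  [SMulCommClass k B Γ] [SMulCommClass k Bᵐᵒᵖ Γ]
  [SMulCommClass B Bᵐᵒᵖ Γ]

noncomputable def conv (f g : H →ₗ[k] B) : H →ₗ[k] B :=
  LinearMap.mul' k B ∘ₗ TensorProduct.map f g ∘ₗ Coalgebra.comul

noncomputable def convUnit : H →ₗ[k] B :=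
  Algebra.linearMap k B ∘ₗ Coalgebra.counit

/-- Left action of `B` on the bimodule `Γ`, as a `k`-bilinear map. -/
noncomputable def lact : B →ₗ[k] Γ →ₗ[k] Γ :=
  LinearMap.mk₂ k (fun b v => b • v)
    (fun b₁ b₂ v => add_smul b₁ b₂ v)
    (fun c b v => smul_assoc c b v)
    (fun b v₁ v₂ => smul_add b v₁ v₂)
    (fun c b v => (smul_comm c b v).symm)

/-- Right action of `B` on the bimodule `Γ`, as a `k`-bilinear map. -/
noncomputable def ract : B →ₗ[k] Γ →ₗ[k] Γ :=
  LinearMap.mk₂ k (fun b v => MulOpposite.op b • v)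
    (fun b₁ b₂ v => by simp [add_smul])
    (fun c b v => by simp [MulOpposite.op_smul, smul_assoc])
    (fun b v₁ v₂ => smul_add _ v₁ v₂)
    (fun c b v => (smul_comm c _ v).symm)

/-- The gauge transform of a connection form:
`A'(h) = Σ τ'(h₁)·A(h₂)·τ(h₃) + Σ τ'(h₁)·dτ(h₂)`. -/
noncomputable def gaugeA (d : B →ₗ[k] Γ) (τ τ' : H →ₗ[k] B)
    (A : H →ₗ[k] Γ) : H →ₗ[k] Γ :=
  (TensorProduct.lift (lact (B := B) (Γ := Γ)) ∘ₗ
    TensorProduct.map τ'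
      (TensorProduct.lift ((ract (B := B) (Γ := Γ)).flip) ∘ₗ
        TensorProduct.map A τ ∘ₗ (Coalgebra.comul : H →ₗ[k] H ⊗[k] H)) ∘ₗ
    (Coalgebra.comul : H →ₗ[k] H ⊗[k] H)) +
  (TensorProduct.lift (lact (B := B) (Γ := Γ)) ∘ₗ
    TensorProduct.map τ' (d ∘ₗ τ) ∘ₗ (Coalgebra.comul : H →ₗ[k] H ⊗[k] H))

noncomputable def lconv (f : H →ₗ[k] B) (M : H →ₗ[k] Γ) : H →ₗ[k] Γ :=
  TensorProduct.lift (lact (B := B) (Γ := Γ)) ∘ₗ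
    TensorProduct.map f M ∘ₗ (Coalgebra.comul : H →ₗ[k] H ⊗[k] H)

noncomputable def rconv (M : H →ₗ[k] Γ) (f : H →ₗ[k] B) : H →ₗ[k] Γ :=
  TensorProduct.lift ((ract (B := B) (Γ := Γ)).flip) ∘ₗ
    TensorProduct.map M f ∘ₗ (Coalgebra.comul : H →ₗ[k] H ⊗[k] H)

open Coalgebra in
lemma lconv_apply (f : H →ₗ[k] B) (M : H →ₗ[k] Γ) (h : H) (r : Coalgebra.Repr k h (H × H)) :
    lconv f M h = ∑ i ∈ r.index, f (r.left i) • M (r.right i) := by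
  simp only [lconv, LinearMap.comp_apply, ← r.eq, map_sum, TensorProduct.map_tmul,
    TensorProduct.lift.tmul, lact, LinearMap.mk₂_apply]

open Coalgebra in
lemma rconv_apply (M : H →ₗ[k] Γ) (f : H →ₗ[k] B) (h : H) (r : Coalgebra.Repr k h (H × H)) :
    rconv M f h = ∑ i ∈ r.index, MulOpposite.op (f (r.right i)) • M (r.left i) := by
  simp only [rconv, LinearMap.comp_apply, ← r.eq, map_sum, TensorProduct.map_tmul,
    TensorProduct.lift.tmul, LinearMap.flip_apply, ract, LinearMap.mk₂_apply]

open Coalgebra in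
lemma conv_apply' (f g : H →ₗ[k] B) (h : H) (r : Coalgebra.Repr k h (H × H)) :
    conv f g h = ∑ i ∈ r.index, f (r.left i) * g (r.right i) := by
  simp only [conv, LinearMap.comp_apply, ← r.eq, map_sum, TensorProduct.map_tmul,
    LinearMap.mul'_apply]

open Coalgebra in
lemma lconv_lconv (f g : H →ₗ[k] B) (M : H →ₗ[k] Γ) :
    lconv f (lconv g M) = lconv (conv f g) M := by
  ext h
  have r := ℛ k h
  rw [lconv_apply f (lconv g M) h r, lconv_apply (conv f g) M h r]
  simp_rw [fun i => lconv_apply g M (r.right i) (ℛ k (r.right i)),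
    fun i => conv_apply' f g (r.left i) (ℛ k (r.left i)),
    Finset.smul_sum, Finset.sum_smul, mul_smul]
  have key := congrArg
    (⇑(TensorProduct.lift (lact (B := B) (Γ := Γ)) ∘ₗ
       TensorProduct.map f (TensorProduct.lift (lact (B := B) (Γ := Γ)) ∘ₗ
         TensorProduct.map g M)))
    (Coalgebra.sum_tmul_tmul_eq r (fun i => ℛ k (r.left i)) (fun i => ℛ k (r.right i)))
  simp only [map_sum, LinearMap.comp_apply, TensorProduct.map_tmul,
    TensorProduct.lift.tmul, lact, LinearMap.mk₂_apply] at key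
  exact key.symm


lemma op_sum_smul {ι : Type*} (s : Finset ι) (ν : ι → B) (v : Γ) :
    MulOpposite.op (∑ j ∈ s, ν j) • v = ∑ j ∈ s, MulOpposite.op (ν j) • v := by
  have : MulOpposite.op (∑ j ∈ s, ν j) = ∑ j ∈ s, MulOpposite.op (ν j) := by
    simpa using map_sum MulOpposite.opAddEquiv ν s
  rw [this, Finset.sum_smul]

open Coalgebra in
lemma rconv_rconv (M : H →ₗ[k] Γ) (f g : H →ₗ[k] B) :
    rconv (rconv M f) g = rconv M (conv f g) := by
  ext h
  have r := ℛ k h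
  rw [rconv_apply (rconv M f) g h r, rconv_apply M (conv f g) h r]
  simp_rw [fun i => rconv_apply M f (r.left i) (ℛ k (r.left i)),
    fun i => conv_apply' f g (r.right i) (ℛ k (r.right i)),
    Finset.smul_sum, op_sum_smul, MulOpposite.op_mul, mul_smul]
  have key := congrArg
    (⇑(TensorProduct.lift ((ract (B := B) (Γ := Γ)).flip) ∘ₗ
       TensorProduct.map M (LinearMap.mul' k B ∘ₗ TensorProduct.map f g)))
    (Coalgebra.sum_tmul_tmul_eq r (fun i => ℛ k (r.left i)) (fun i => ℛ k (r.right i)))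
  simp only [map_sum, LinearMap.comp_apply, TensorProduct.map_tmul, LinearMap.mul'_apply,
    TensorProduct.lift.tmul, LinearMap.flip_apply, ract, LinearMap.mk₂_apply,
    MulOpposite.op_mul, mul_smul] at key
  exact key

open Coalgebra in
lemma rconv_lconv (f : H →ₗ[k] B) (M : H →ₗ[k] Γ) (g : H →ₗ[k] B) :
    rconv (lconv f M) g = lconv f (rconv M g) := by
  ext h
  have r := ℛ k h
  rw [rconv_apply (lconv f M) g h r, lconv_apply f (rconv M g) h r]
  simp_rw [fun i => lconv_apply f M (r.left i) (ℛ k (r.left i)),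
    fun i => rconv_apply M g (r.right i) (ℛ k (r.right i)),
    Finset.smul_sum]
  have hc : ∀ (x : B) (y : Bᵐᵒᵖ) (v : Γ), y • x • v = x • y • v :=
    fun x y v => (smul_comm x y v).symm
  simp_rw [hc]
  have key := congrArg
    (⇑(TensorProduct.lift (lact (B := B) (Γ := Γ)) ∘ₗ
       TensorProduct.map f (TensorProduct.lift ((ract (B := B) (Γ := Γ)).flip) ∘ₗ
         TensorProduct.map M g)))
    (Coalgebra.sum_tmul_tmul_eq r (fun i => ℛ k (r.left i)) (fun i => ℛ k (r.right i)))
  simp only [map_sum, LinearMap.comp_apply, TensorProduct.map_tmul,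
    TensorProduct.lift.tmul, LinearMap.flip_apply, lact, ract, LinearMap.mk₂_apply] at key
  exact key

open Coalgebra in
lemma lconv_unit (M : H →ₗ[k] Γ) : lconv (convUnit : H →ₗ[k] B) M = M := by
  ext h
  rw [lconv_apply convUnit M h (ℛ k h)]
  have key := congrArg (⇑(TensorProduct.lid k Γ))
    (Coalgebra.sum_counit_tmul_map_eq (R := k) M h (repr := ℛ k h))
  simp only [map_sum, TensorProduct.lid_tmul, one_smul] at key
  simpa [convUnit, algebraMap_smul] using key

open Coalgebra in
lemma rconv_unit (M : H →ₗ[k] Γ) : rconv M (convUnit : H →ₗ[k] B) = M := by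
  ext h
  rw [rconv_apply M convUnit h (ℛ k h)]
  have key := congrArg (⇑(TensorProduct.rid k Γ))
    (Coalgebra.sum_map_tmul_counit_eq (R := k) M h (repr := ℛ k h))
  simp only [map_sum, TensorProduct.rid_tmul, one_smul] at key
  have hs : ∀ (c : k) (v : Γ), MulOpposite.op ((algebraMap k B) c) • v = c • v := by
    intro c v
    rw [← MulOpposite.algebraMap_apply, algebraMap_smul]
  simpa [convUnit, hs] using key

lemma lconv_add (f : H →ₗ[k] B) (M N : H →ₗ[k] Γ) :
    lconv f (M + N) = lconv f M + lconv f N := by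
  unfold lconv
  rw [TensorProduct.map_add_right, LinearMap.add_comp, LinearMap.comp_add]

lemma rconv_add (M N : H →ₗ[k] Γ) (f : H →ₗ[k] B) :
    rconv (M + N) f = rconv M f + rconv N f := by
  unfold rconv
  rw [TensorProduct.map_add_left, LinearMap.add_comp, LinearMap.comp_add]

open Coalgebra in
lemma leibniz_conv (d : B →ₗ[k] Γ)
    (hLeibniz : ∀ a b : B, d (a * b) = MulOpposite.op b • d a + a • d b)
    (τ τ' : H →ₗ[k] B) :
    rconv (d ∘ₗ τ) τ' + lconv τ (d ∘ₗ τ') = d ∘ₗ conv τ τ' := by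
  ext h
  simp only [LinearMap.add_apply, LinearMap.comp_apply]
  rw [rconv_apply (d ∘ₗ τ) τ' h (ℛ k h), lconv_apply τ (d ∘ₗ τ') h (ℛ k h),
    conv_apply' τ τ' h (ℛ k h), map_sum, ← Finset.sum_add_distrib]
  exact Finset.sum_congr rfl fun i _ => (hLeibniz _ _).symm

lemma d_convUnit (d : B →ₗ[k] Γ) (hd1 : d 1 = 0) :
    d ∘ₗ (convUnit : H →ₗ[k] B) = 0 := by
  ext h
  simp [convUnit, Algebra.algebraMap_eq_smul_one, map_smul, hd1]

lemma gaugeA_eq (d : B →ₗ[k] Γ) (τ τ' : H →ₗ[k] B) (A : H →ₗ[k] Γ) :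
    gaugeA d τ τ' A = lconv τ' (rconv A τ) + lconv τ' (d ∘ₗ τ) := rfl

/-- The gauge transformation of connection forms by `τ` is inverted by the gauge
transformation by its convolution inverse `τ'`: `(A^τ)^{τ'} = A`. -/
theorem statement_18 (d : B →ₗ[k] Γ)
    (hd1 : d 1 = 0)
    (hLeibniz : ∀ a b : B, d (a * b) = MulOpposite.op b • d a + a • d b)
    (τ τ' : H →ₗ[k] B) (hτ1 : τ 1 = 1) (hτ'1 : τ' 1 = 1)
    (hττ' : conv τ' τ = (convUnit : H →ₗ[k] B) ∧ conv τ τ' = (convUnit : H →ₗ[k] B))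
    (A : H →ₗ[k] Γ) (hA1 : A 1 = 0) :
    gaugeA d τ' τ (gaugeA d τ τ' A) = A := by
  obtain ⟨h1, h2⟩ := hττ'
  rw [gaugeA_eq d τ τ' A, gaugeA_eq d τ' τ _, rconv_add, rconv_lconv, rconv_lconv,
    rconv_rconv, h2, rconv_unit, ← lconv_add]
  rw [← lconv_add τ' A (rconv (d ∘ₗ τ) τ'),
    lconv_add τ (lconv τ' (A + rconv (d ∘ₗ τ) τ')) (d ∘ₗ τ'),
    lconv_lconv, h2, lconv_unit, add_assoc,
    leibniz_conv d hLeibniz τ τ', h2, d_convUnit d hd1, add_zero]
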